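/- Compositionality Lemma: the extension of a syntactic translation τ : Σ → Σ' between second-order signatures commutes with substitution and metasubstitution: for all appropriately typed terms, τ(t{xᵢ := tᵢ}_{i∈[n]}) = τ(t){xᵢ := τ(tᵢ)}_{i∈[n]} and τ(t{𝕞ᵢ := (x⃗ᵢ)tᵢ}_{i∈[k]}) = τ(t){𝕞ᵢ := (x⃗ᵢ)τ(tᵢ)}_{i∈[k]}. -/

import Mathlib

/-! ## Second-order syntax (de Bruijn representation)

An arity/sequence `(m₁,…,m_k) ∈ ℕ*` is a `Ctxa`.  A second-order signature is a set of
operators with such arities.  Terms in a metavariable context (given by a type `M` of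
metavariables with meta-arities `mar : M → ℕ`) and a variable context of size `n` are
generated by variables, metavariables applied to their parameters, and operators binding
variables in their arguments.  Working with de Bruijn indices gives terms up to
α-equivalence. -/

/-- A finite sequence `(m₁,…,m_k)` of natural numbers (an element of ℕ*). -/
structure Ctxa where
  len : ℕ
  ar : Fin len → ℕ

/-- A second-order signature: a set of operators with arities `(n₁,…,n_k) ∈ ℕ*`;
an operator of arity `(n₁,…,n_k)` takes `k` arguments and binds `nᵢ` variables in the
`i`-th argument. -/
structure SOSig : Type 1 where
  Op : Type
  arity : Op → Ctxa

namespace SO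

/-- Second-order terms over the signature `S`, in metavariable context `(M, mar)` and
variable context of size `n` (variables are de Bruijn indices `Fin n`, so terms are
automatically identified up to α-equivalence). -/
inductive Term (S : SOSig) (M : Type) (mar : M → ℕ) : ℕ → Type
  | var {n : ℕ} : Fin n → Term S M mar n
  | mvar {n : ℕ} (m : M) (ts : Fin (mar m) → Term S M mar n) : Term S M mar n
  | op {n : ℕ} (o : S.Op)
      (ts : ∀ i : Fin (S.arity o).len, Term S M mar (n + (S.arity o).ar i)) :
      Term S M mar n

namespace Term

variable {S : SOSig} {M M' : Type} {mar : M → ℕ} {mar' : M' → ℕ}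

/-- Cast a term along an equality of variable-context sizes. -/
def castCtx {n n' : ℕ} (h : n = n') (t : Term S M mar n) : Term S M mar n' := h ▸ t

/-- Extend a renaming to a context enlarged by `p` bound variables. -/
def extRen {n n' : ℕ} (ρ : Fin n → Fin n') (p : ℕ) : Fin (n + p) → Fin (n' + p) :=
  Fin.addCases (fun j => Fin.castAdd p (ρ j)) (fun j => Fin.natAdd n' j)

/-- Renaming of variables. -/
def rename : ∀ {n n' : ℕ}, Term S M mar n → (Fin n → Fin n') → Term S M mar n'
  | _, _, .var x, ρ => .var (ρ x)
  | _, _, .mvar m ts, ρ => .mvar m (fun j => rename (ts j) ρ)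
  | _, _, .op o ts, ρ => .op o (fun i => rename (ts i) (extRen ρ _))

/-- Weakening of a term by `p` fresh variables (added at the end of the context). -/
def weaken {n : ℕ} (p : ℕ) (t : Term S M mar n) : Term S M mar (n + p) :=
  rename t (Fin.castAdd p)

/-- Extend a simultaneous substitution to a context enlarged by `p` bound variables
(the bound variables are mapped to themselves). -/
def extSub {n n' : ℕ} (σ : Fin n → Term S M mar n') (p : ℕ) :
    Fin (n + p) → Term S M mar (n' + p) :=
  Fin.addCases (fun j => weaken p (σ j)) (fun j => .var (Fin.natAdd n' j))

/-- Capture-avoiding simultaneous substitution `t{xᵢ := σ(i)}` of terms for variables. -/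
def subst : ∀ {n n' : ℕ}, Term S M mar n → (Fin n → Term S M mar n') → Term S M mar n'
  | _, _, .var x, σ => σ x
  | _, _, .mvar m ts, σ => .mvar m (fun j => subst (ts j) σ)
  | _, _, .op o ts, σ => .op o (fun i => subst (ts i) (extSub σ _))

/-- The renaming inserting `p` fresh variables in the middle of a context `n' + a`
(between the first `n'` variables and the last `a` bound ones). -/
def midWeak (n' p a : ℕ) : Fin (n' + a) → Fin (n' + p + a) :=
  Fin.addCases (fun j => Fin.castAdd a (Fin.castAdd p j)) (fun j => Fin.natAdd (n' + p) j)

/-- Metasubstitution `t{𝕞 := (x⃗_𝕞)s(𝕞)}` (simultaneously renaming the variables of `t`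
along `ρ`): each metavariable `𝕞` of meta-arity `mar 𝕞` is replaced by the term
`s 𝕞`, which lives in the target context extended by `mar 𝕞` abstracted variables;
the parameters of `𝕞` are substituted for those abstracted variables. -/
def msubst : ∀ {n n' : ℕ}, Term S M mar n → (Fin n → Fin n') →
    (∀ m : M, Term S M' mar' (n' + mar m)) → Term S M' mar' n'
  | _, _, .var x, ρ, _ => .var (ρ x)
  | _, _, .mvar m ts, ρ, s =>
      subst (s m) (Fin.addCases (fun j => .var j) (fun j => msubst (ts j) ρ s))
  | _, _, .op o ts, ρ, s =>
      .op o (fun i => msubst (ts i) (extRen ρ _) (fun m => rename (s m) (midWeak _ _ _)))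

end Term

end SO
namespace SO

/-- A syntactic translation between second-order signatures: each operator
`ω : (m₁,…,m_k)` of `S` is assigned a term `𝕞₁:[m₁],…,𝕞_k:[m_k] ▹ ∅ ⊢ τ_ω` over `S'`
(empty variable context; the metavariable context is determined by the arity). -/
def Translation (S S' : SOSig) : Type :=
  ∀ o : S.Op, Term S' (Fin (S.arity o).len) (S.arity o).ar 0

/-- The extension of a syntactic translation to all terms: `τ(x) = x`,
`τ(𝕞[t₁,…,t_m]) = 𝕞[τ(t₁),…,τ(t_m)]`, and
`τ(ω((x⃗₁)t₁,…,(x⃗_k)t_k)) = τ_ω{𝕞ᵢ := (x⃗ᵢ)τ(tᵢ)}`. -/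
def Translation.ext {S S' : SOSig} (τ : Translation S S') {M : Type} {mar : M → ℕ} :
    ∀ {n : ℕ}, Term S M mar n → Term S' M mar n
  | _, .var x => .var x
  | _, .mvar m ts => .mvar m (fun j => τ.ext (ts j))
  | _, .op o ts => Term.msubst (τ o) Fin.elim0 (fun i => τ.ext (ts i))

end SO

open SO SO.Term
namespace SO
namespace Term

variable {S : SOSig} {A B : Type} {arA : A → ℕ} {arB : B → ℕ}

@[simp] theorem extRen_castAdd {n n' : ℕ} (ρ : Fin n → Fin n') (p : ℕ) (j : Fin n) :
    extRen ρ p (Fin.castAdd p j) = Fin.castAdd p (ρ j) := by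
  simp [extRen]

@[simp] theorem extRen_natAdd {n n' : ℕ} (ρ : Fin n → Fin n') (p : ℕ) (j : Fin p) :
    extRen ρ p (Fin.natAdd n j) = Fin.natAdd n' j := by
  simp [extRen]

@[simp] theorem extSub_castAdd {n n' : ℕ} (σ : Fin n → Term S A arA n') (p : ℕ) (j : Fin n) :
    extSub σ p (Fin.castAdd p j) = weaken p (σ j) := by
  simp [extSub]

@[simp] theorem extSub_natAdd {n n' : ℕ} (σ : Fin n → Term S A arA n') (p : ℕ) (j : Fin p) :
    extSub σ p (Fin.natAdd n j) = .var (Fin.natAdd n' j) := by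
  simp [extSub]

@[simp] theorem midWeak_castAdd (n' p a : ℕ) (j : Fin n') :
    midWeak n' p a (Fin.castAdd a j) = Fin.castAdd a (Fin.castAdd p j) := by
  simp [midWeak]

@[simp] theorem midWeak_natAdd (n' p a : ℕ) (j : Fin a) :
    midWeak n' p a (Fin.natAdd n' j) = Fin.natAdd (n' + p) j := by
  simp [midWeak]

theorem midWeak_eq (n' p a : ℕ) :
    midWeak n' p a = extRen (Fin.castAdd p (n := n')) a := by
  funext x
  induction x using Fin.addCases <;> simp

theorem rename_rename {M : Type} {mar : M → ℕ} :
    ∀ {n : ℕ} (t : Term S M mar n) {n₂ n₃ : ℕ} (ρ₁ : Fin n → Fin n₂) (ρ₂ : Fin n₂ → Fin n₃),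
    rename (rename t ρ₁) ρ₂ = rename t (fun x => ρ₂ (ρ₁ x)) := by
  intro n t
  induction t with
  | var x => intros; rfl
  | mvar m ts ih =>
    intro n₂ n₃ ρ₁ ρ₂
    simp only [rename]
    congr 1; funext j; exact ih j ρ₁ ρ₂
  | op o ts ih =>
    intro n₂ n₃ ρ₁ ρ₂
    simp only [rename]
    congr 1; funext i
    rw [ih i]
    congr 1
    funext x
    induction x using Fin.addCases <;> simp

theorem subst_rename {M : Type} {mar : M → ℕ} :
    ∀ {n : ℕ} (t : Term S M mar n) {n₂ n₃ : ℕ} (ρ : Fin n → Fin n₂)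
      (σ : Fin n₂ → Term S M mar n₃),
    subst (rename t ρ) σ = subst t (fun x => σ (ρ x)) := by
  intro n t
  induction t with
  | var x => intros; rfl
  | mvar m ts ih =>
    intro n₂ n₃ ρ σ
    simp only [rename, subst]
    congr 1; funext j; exact ih j ρ σ
  | op o ts ih =>
    intro n₂ n₃ ρ σ
    simp only [rename, subst]
    congr 1; funext i
    rw [ih i]
    congr 1
    funext x
    induction x using Fin.addCases <;> simp

theorem rename_subst {M : Type} {mar : M → ℕ} :
    ∀ {n : ℕ} (t : Term S M mar n) {n₂ n₃ : ℕ} (σ : Fin n → Term S M mar n₂)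
      (ρ : Fin n₂ → Fin n₃),
    rename (subst t σ) ρ = subst t (fun x => rename (σ x) ρ) := by
  intro n t
  induction t with
  | var x => intros; rfl
  | mvar m ts ih =>
    intro n₂ n₃ σ ρ
    simp only [rename, subst]
    congr 1; funext j; exact ih j σ ρ
  | op o ts ih =>
    intro n₂ n₃ σ ρ
    simp only [rename, subst]
    congr 1; funext i
    rw [ih i]
    congr 1
    funext x
    induction x using Fin.addCases with
    | left j =>
      simp only [extSub_castAdd, weaken, rename_rename]
      congr 1
      funext y
      simp
    | right j => simp [rename]

theorem extSub_var {n p : ℕ} :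
    extSub (fun x => (.var x : Term S A arA n)) p = fun x => .var x := by
  funext x
  induction x using Fin.addCases <;> simp [weaken, rename]

theorem subst_var {M : Type} {mar : M → ℕ} :
    ∀ {n : ℕ} (t : Term S M mar n), subst t (fun x => .var x) = t := by
  intro n t
  induction t with
  | var x => rfl
  | mvar m ts ih =>
    simp only [subst]
    congr 1; funext j; exact ih j
  | op o ts ih =>
    simp only [subst]
    congr 1; funext i
    rw [extSub_var, ih i]

theorem subst_subst {M : Type} {mar : M → ℕ} :
    ∀ {n : ℕ} (t : Term S M mar n) {n₂ n₃ : ℕ} (σ₁ : Fin n → Term S M mar n₂)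
      (σ₂ : Fin n₂ → Term S M mar n₃),
    subst (subst t σ₁) σ₂ = subst t (fun x => subst (σ₁ x) σ₂) := by
  intro n t
  induction t with
  | var x => intros; rfl
  | mvar m ts ih =>
    intro n₂ n₃ σ₁ σ₂
    simp only [subst]
    congr 1; funext j; exact ih j σ₁ σ₂
  | op o ts ih =>
    intro n₂ n₃ σ₁ σ₂
    simp only [subst]
    congr 1; funext i
    rw [ih i]
    congr 1
    funext x
    induction x using Fin.addCases with
    | left j =>
      simp only [extSub_castAdd, weaken, subst_rename, rename_subst]
    | right j => simp [subst]

end Term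
end SO
namespace SO
namespace Term

variable {S : SOSig} {A B C : Type} {arA : A → ℕ} {arB : B → ℕ} {arC : C → ℕ}

theorem msubst_rename :
    ∀ {n : ℕ} (t : Term S A arA n) {n₂ n₃ : ℕ} (ρ₀ : Fin n → Fin n₂) (ρ : Fin n₂ → Fin n₃)
      (s : ∀ a : A, Term S B arB (n₃ + arA a)),
    msubst (rename t ρ₀) ρ s = msubst t (fun x => ρ (ρ₀ x)) s := by
  intro n t
  induction t with
  | var x => intros; rfl
  | mvar m ts ih =>
    intro n₂ n₃ ρ₀ ρ s
    simp only [rename, msubst]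
    congr 1
    funext x
    induction x using Fin.addCases with
    | left j => simp
    | right j => simp [ih]
  | op o ts ih =>
    intro n₂ n₃ ρ₀ ρ s
    simp only [rename, msubst]
    congr 1
    funext i
    rw [ih i]
    congr 1
    funext x
    induction x using Fin.addCases <;> simp

theorem rename_msubst :
    ∀ {n : ℕ} (t : Term S A arA n) {n₂ n₃ : ℕ} (ρ : Fin n → Fin n₂)
      (s : ∀ a : A, Term S B arB (n₂ + arA a)) (ρ₂ : Fin n₂ → Fin n₃),
    rename (msubst t ρ s) ρ₂ =
      msubst t (fun x => ρ₂ (ρ x)) (fun a => rename (s a) (extRen ρ₂ (arA a))) := by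
  intro n t
  induction t with
  | var x => intros; rfl
  | mvar m ts ih =>
    intro n₂ n₃ ρ s ρ₂
    simp only [msubst, rename_subst, subst_rename]
    congr 1
    funext x
    induction x using Fin.addCases with
    | left j => simp [rename]
    | right j => simp [ih]
  | op o ts ih =>
    intro n₂ n₃ ρ s ρ₂
    simp only [msubst, rename]
    congr 1
    funext i
    rw [ih i]
    congr 1
    · funext x
      induction x using Fin.addCases <;> simp
    · funext m
      rw [rename_rename, rename_rename]
      congr 1
      funext x
      induction x using Fin.addCases <;> simp

theorem subst_msubst :
    ∀ {n : ℕ} (t : Term S A arA n) {n₂ n₃ : ℕ} (ρ : Fin n → Fin n₂)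
      (s : ∀ a : A, Term S B arB (n₂ + arA a)) (σ : Fin n₂ → Term S B arB n₃)
      (ρ' : Fin n → Fin n₃) (h : ∀ x, σ (ρ x) = .var (ρ' x)),
    subst (msubst t ρ s) σ =
      msubst t ρ' (fun a => subst (s a) (extSub σ (arA a))) := by
  intro n t
  induction t with
  | var x =>
    intro n₂ n₃ ρ s σ ρ' h
    simp only [msubst, subst]
    exact h x
  | mvar m ts ih =>
    intro n₂ n₃ ρ s σ ρ' h
    simp only [msubst, subst_subst]
    congr 1
    funext x
    induction x using Fin.addCases with
    | left j => simp [weaken, subst, subst_rename, subst_var]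
    | right j =>
      simp only [Fin.addCases_right, extSub_natAdd, subst]
      exact ih j ρ s σ ρ' h
  | op o ts ih =>
    intro n₂ n₃ ρ s σ ρ' h
    simp only [msubst, subst]
    congr 1
    funext i
    have h' : ∀ x, extSub σ ((S.arity o).ar i) (extRen ρ ((S.arity o).ar i) x) =
        .var (extRen ρ' ((S.arity o).ar i) x) := by
      intro x
      induction x using Fin.addCases with
      | left j => simp [h, weaken, rename]
      | right j => simp
    rw [ih i _ _ _ _ h']
    congr 1
    funext m
    rw [subst_rename, rename_subst]
    congr 1
    funext x
    induction x using Fin.addCases with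
    | left j =>
      simp only [midWeak_castAdd, extSub_castAdd, weaken, rename_rename]
    | right j => simp [rename]

theorem msubst_subst :
    ∀ {q : ℕ} (t : Term S A arA q) {n n' q' : ℕ}
      (θ : Fin q → Term S A arA n) (ρ : Fin n → Fin n')
      (s : ∀ a : A, Term S B arB (n' + arA a))
      (ρq : Fin q → Fin q') (sq : ∀ a : A, Term S B arB (q' + arA a))
      (θ' : Fin q' → Term S B arB n') (h₀ : Fin n' → Fin q')
      (H0 : ∀ j, θ' (h₀ j) = .var j)
      (Hs : ∀ a, sq a = rename (s a) (extRen h₀ (arA a)))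
      (H1 : ∀ x, θ' (ρq x) = msubst (θ x) ρ s),
    msubst (subst t θ) ρ s = subst (msubst t ρq sq) θ' := by
  intro q t
  induction t with
  | var x =>
    intro n n' q' θ ρ s ρq sq θ' h₀ H0 Hs H1
    simp only [subst, msubst]
    exact (H1 x).symm
  | mvar m ts ih =>
    intro n n' q' θ ρ s ρq sq θ' h₀ H0 Hs H1
    simp only [subst, msubst, subst_subst, Hs, subst_rename]
    congr 1
    funext x
    induction x using Fin.addCases with
    | left j => simp [H0, subst]
    | right j =>
      simp only [Fin.addCases_right, extRen_natAdd, subst]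
      exact ih j θ ρ s ρq sq θ' h₀ H0 Hs H1
  | op o ts ih =>
    intro n n' q' θ ρ s ρq sq θ' h₀ H0 Hs H1
    simp only [subst, msubst]
    congr 1
    funext i
    set a := (S.arity o).ar i with ha
    refine ih i (extSub θ a) (extRen ρ a)
      (fun aa => rename (s aa) (midWeak n' a (arA aa)))
      (extRen ρq a) (fun aa => rename (sq aa) (midWeak q' a (arA aa)))
      (extSub θ' a) (extRen h₀ a) ?_ ?_ ?_
    · intro j
      induction j using Fin.addCases with
      | left j => simp [H0, weaken, rename]
      | right j => simp
    · intro aa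
      simp only [Hs, rename_rename]
      congr 1
      funext x
      induction x using Fin.addCases <;> simp
    · intro x
      induction x using Fin.addCases with
      | left j =>
        change extSub θ' a (extRen ρq a (Fin.castAdd a j)) =
          (extSub θ a (Fin.castAdd a j)).msubst (extRen ρ a) fun aa => (s aa).rename (midWeak n' a (arA aa))
        simp only [extRen_castAdd, extSub_castAdd, H1, weaken, rename_msubst, msubst_rename,
          midWeak_eq]
      | right j => simp [msubst]

theorem msubst_msubst :
    ∀ {n₀ : ℕ} (t : Term S A arA n₀) {n n' : ℕ} (ρ₀ : Fin n₀ → Fin n)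
      (f : ∀ a : A, Term S B arB (n + arA a)) (ρ : Fin n → Fin n')
      (s : ∀ b : B, Term S C arC (n' + arB b)),
    msubst (msubst t ρ₀ f) ρ s =
      msubst t (fun x => ρ (ρ₀ x))
        (fun a => msubst (f a) (extRen ρ (arA a))
          (fun b => rename (s b) (midWeak n' (arA a) (arB b)))) := by
  intro n₀ t
  induction t with
  | var x => intros; rfl
  | mvar m ts ih =>
    intro n n' ρ₀ f ρ s
    simp only [msubst]
    rw [msubst_subst (f m)
      (Fin.addCases (fun j => .var j) (fun j => msubst (ts j) ρ₀ f)) ρ s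
      (extRen ρ (arA m)) (fun b => rename (s b) (midWeak n' (arA m) (arB b)))
      (Fin.addCases (fun j => .var j) (fun j => msubst (msubst (ts j) ρ₀ f) ρ s))
      (Fin.castAdd (arA m))
      (fun j => by simp)
      (fun b => by simp [midWeak_eq])
      (fun x => by
        induction x using Fin.addCases with
        | left j => simp [msubst]
        | right j => simp [msubst])]
    congr 1
    funext x
    induction x using Fin.addCases with
    | left j => simp
    | right j => simp [ih]
  | op o ts ih =>
    intro n n' ρ₀ f ρ s
    simp only [msubst]
    congr 1
    funext i
    rw [ih i]
    congr 1
    · funext x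
      induction x using Fin.addCases <;> simp
    · funext aa
      rw [msubst_rename, rename_msubst]
      congr 1
      · funext x
        induction x using Fin.addCases <;> simp
      · funext b
        rw [rename_rename, rename_rename]
        congr 1
        funext x
        induction x using Fin.addCases <;> simp

end Term
end SO
namespace SO

open Term

variable {S S' : SOSig}

theorem ext_rename (τ : Translation S S') {M : Type} {mar : M → ℕ} :
    ∀ {n : ℕ} (t : Term S M mar n) {n' : ℕ} (ρ : Fin n → Fin n'),
    τ.ext (rename t ρ) = rename (τ.ext t) ρ := by
  intro n t
  induction t with
  | var x => intros; rfl
  | mvar m ts ih =>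
    intro n' ρ
    simp only [rename, Translation.ext]
    congr 1
    funext j
    exact ih j ρ
  | op o ts ih =>
    intro n' ρ
    simp only [rename, Translation.ext, rename_msubst]
    congr 1
    · funext x
      exact x.elim0
    · funext i
      exact ih i (extRen ρ _)

theorem ext_subst (τ : Translation S S') {M : Type} {mar : M → ℕ} :
    ∀ {n : ℕ} (t : Term S M mar n) {n' : ℕ} (σ : Fin n → Term S M mar n'),
    τ.ext (subst t σ) = subst (τ.ext t) (fun x => τ.ext (σ x)) := by
  intro n t
  induction t with
  | var x => intros; rfl
  | mvar m ts ih =>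
    intro n' σ
    simp only [subst, Translation.ext]
    congr 1
    funext j
    exact ih j σ
  | op o ts ih =>
    intro n' σ
    simp only [subst, Translation.ext]
    rw [subst_msubst (τ o) Fin.elim0 (fun i => τ.ext (ts i)) (fun x => τ.ext (σ x))
      Fin.elim0 (fun x => x.elim0)]
    congr 1
    funext i
    rw [ih i]
    congr 1
    funext x
    induction x using Fin.addCases with
    | left j => simp [weaken, ext_rename]
    | right j => simp [Translation.ext]

theorem ext_msubst (τ : Translation S S') {M M' : Type} {mar : M → ℕ} {mar' : M' → ℕ} :
    ∀ {n : ℕ} (t : Term S M mar n) {n' : ℕ} (ρ : Fin n → Fin n')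
      (s : ∀ m : M, Term S M' mar' (n' + mar m)),
    τ.ext (msubst t ρ s) = msubst (τ.ext t) ρ (fun m => τ.ext (s m)) := by
  intro n t
  induction t with
  | var x => intros; rfl
  | mvar m ts ih =>
    intro n' ρ s
    simp only [msubst, Translation.ext, ext_subst]
    congr 1
    funext x
    induction x using Fin.addCases with
    | left j => simp [Translation.ext]
    | right j => simp [ih]
  | op o ts ih =>
    intro n' ρ s
    simp only [msubst, Translation.ext, msubst_msubst]
    congr 1
    · funext x
      exact x.elim0
    · funext i
      rw [ih i]
      congr 1
      funext m
      rw [ext_rename]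

end SO


/-- **Compositionality Lemma.**
The extension of a syntactic translation `τ : Σ → Σ'` between second-order signatures
commutes with substitution and with metasubstitution: for all appropriately typed
terms, `τ(t{xᵢ := σ(i)}) = τ(t){xᵢ := τ(σ(i))}` and
`τ(t{𝕞 := (x⃗_𝕞)s(𝕞)}) = τ(t){𝕞 := (x⃗_𝕞)τ(s(𝕞))}`. -/
theorem translation_compositionality {S S' : SOSig} (τ : Translation S S') :
    (∀ {M : Type} {mar : M → ℕ} {n n' : ℕ}
       (t : Term S M mar n) (σ : Fin n → Term S M mar n'),
       τ.ext (subst t σ) = subst (τ.ext t) (fun x => τ.ext (σ x))) ∧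
    (∀ {M M' : Type} {mar : M → ℕ} {mar' : M' → ℕ} {n : ℕ}
       (t : Term S M mar n) (s : ∀ m : M, Term S M' mar' (n + mar m)),
       τ.ext (msubst t id s) = msubst (τ.ext t) id (fun m => τ.ext (s m))) := by
  exact ⟨fun t σ => ext_subst τ t σ, fun t s => ext_msubst τ t id s⟩
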